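/- Let f ∈ k[x_0,...,x_r] be a homogeneous polynomial over a field of characteristic zero. The Hessian determinant h(f) = det(∂²f/∂x_i∂x_j) vanishes identically if and only if the partial derivatives ∂f/∂x_0, ..., ∂f/∂x_r are algebraically dependent over k. -/

import Mathlib

open MvPolynomial Finsupp

set_option linter.unusedSectionVars false
set_option linter.unusedVariables false


set_option linter.unusedSectionVars false

section JacobianCriterion

variable {k : Type*} [Field k] [CharZero k]




lemma coeff_pderiv_aux {σ : Type*} [DecidableEq σ] (j : σ) (P : MvPolynomial σ k)
    (u : σ →₀ ℕ) :
    coeff u (pderiv j P) = (u j + 1 : ℕ) * coeff (u + Finsupp.single j 1) P := by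
  induction P using MvPolynomial.induction_on' with
  | monomial s a =>
    rw [pderiv_monomial, coeff_monomial, coeff_monomial]
    by_cases hs : s j = 0
    · have h2 : s ≠ u + Finsupp.single j 1 := by
        intro h
        have : s j = u j + 1 := by simp [h]
        omega
      rw [if_neg h2, mul_zero]
      split_ifs with h1
      · simp [hs]
      · rfl
    · have hle : Finsupp.single j 1 ≤ s := by
        rw [Finsupp.single_le_iff]; omega
      have key : s - Finsupp.single j 1 = u ↔ s = u + Finsupp.single j 1 :=
        tsub_eq_iff_eq_add_of_le hle
      split_ifs with h1 h2 h2
      · have : s j = u j + 1 := by rw [h2]; simp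
        rw [this]
        push_cast
        ring
      · exact absurd (key.mp h1) h2
      · exact absurd (key.mpr h2) h1
      · rw [mul_zero]
  | add p q hp hq => simp [hp, hq]; ring

lemma totalDegree_pderiv_lt {σ : Type*} [DecidableEq σ] {P : MvPolynomial σ k}
    (hP : P.totalDegree ≠ 0) (j : σ) : (pderiv j P).totalDegree < P.totalDegree := by
  rw [MvPolynomial.totalDegree, Finset.sup_lt_iff
    (by simpa using Nat.pos_of_ne_zero hP : (⊥ : ℕ) < P.totalDegree)]
  intro u hu
  rw [MvPolynomial.mem_support_iff, coeff_pderiv_aux] at hu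
  have h2 : coeff (u + Finsupp.single j 1) P ≠ 0 := fun h => hu (by rw [h, mul_zero])
  have h3 := MvPolynomial.le_totalDegree (MvPolynomial.mem_support_iff.mpr h2)
  have h4 : ((u + Finsupp.single j 1).sum fun _ e => e) = (u.sum fun _ e => e) + 1 := by
    rw [Finsupp.sum_add_index' (fun _ => rfl) (fun _ _ _ => rfl),
      Finsupp.sum_single_index rfl]
  omega



lemma exists_pderiv_ne_zero {σ : Type*} [DecidableEq σ] {P : MvPolynomial σ k}
    (hP : P.totalDegree ≠ 0) : ∃ j, pderiv j P ≠ 0 := by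
  have h1 : ∃ u ∈ P.support, (u.sum fun _ e => e) ≠ 0 := by
    by_contra h
    push_neg at h
    exact hP (Nat.le_zero.mp (Finset.sup_le fun u hu => Nat.le_zero.mpr (h u hu)))
  obtain ⟨u, hu, hsum⟩ := h1
  have hune : u ≠ 0 := fun h => hsum (by simp [h])
  obtain ⟨j, hj⟩ : ∃ j, u j ≠ 0 := by
    by_contra h; push_neg at h; exact hune (Finsupp.ext h)
  refine ⟨j, fun h0 => ?_⟩
  set u' : σ →₀ ℕ := u - Finsupp.single j 1 with hu'
  have := coeff_pderiv_aux j P u'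
  rw [h0] at this
  have hle : Finsupp.single j 1 ≤ u := by rw [Finsupp.single_le_iff]; omega
  rw [hu', tsub_add_cancel_of_le hle] at this
  have hcoeff : coeff u P ≠ 0 := MvPolynomial.mem_support_iff.mp hu
  have hj2 : (u' j + 1 : ℕ) ≠ 0 := by omega
  exact hcoeff ((mul_eq_zero.mp (by rw [← this]; simp)).resolve_left
    (Nat.cast_ne_zero.mpr hj2))

/-- Chain rule. -/
lemma pderiv_aeval_eq {m : ℕ} (g : Fin m → MvPolynomial (Fin m) k)
    (P : MvPolynomial (Fin m) k) (i : Fin m) :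
    pderiv i (aeval g P) = ∑ j, aeval g (pderiv j P) * pderiv i (g j) := by
  induction P using MvPolynomial.induction_on with
  | C a => simp
  | add p q hp hq => simp only [map_add, hp, hq, add_mul, Finset.sum_add_distrib]
  | mul_X p s hp =>
    simp only [map_mul, aeval_X, Derivation.leibniz, smul_eq_mul, map_add, pderiv_X,
      Pi.single_apply, hp]
    simp only [apply_ite (aeval g), map_one, map_zero, add_mul, Finset.sum_add_distrib,
      ite_mul, one_mul, zero_mul, mul_ite, mul_zero, mul_one, Finset.mul_sum,
      Finset.sum_ite_eq, Finset.mem_univ, if_true]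
    simp only [← mul_assoc]

lemma eq_C_of_totalDegree_eq_zero' {σ : Type*} {p : MvPolynomial σ k}
    (h : p.totalDegree = 0) : p = C (coeff 0 p) := by
  classical
  ext u
  rw [coeff_C]
  by_cases hu : (0 : σ →₀ ℕ) = u
  · rw [if_pos hu, ← hu]
  · rw [if_neg hu]
    by_contra hc
    exact hu (Finsupp.ext fun x => by
      rw [Finsupp.coe_zero, Pi.zero_apply,
        (totalDegree_eq_zero_iff σ p).mp h u (MvPolynomial.mem_support_iff.mpr hc) x]).symm

lemma det_eq_zero_of_not_algIndep {m : ℕ} (g : Fin m → MvPolynomial (Fin m) k)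
    (h : ¬ AlgebraicIndependent k g) :
    (Matrix.of fun i j : Fin m => pderiv i (g j)).det = 0 := by
  rw [algebraicIndependent_iff] at h
  push_neg at h
  have hex : ∃ n : ℕ, ∃ P : MvPolynomial (Fin m) k,
      P ≠ 0 ∧ aeval g P = 0 ∧ P.totalDegree = n := by
    obtain ⟨P, h1, h2⟩ := h
    exact ⟨P.totalDegree, P, h2, h1, rfl⟩
  classical
  obtain ⟨P, hP0, hPev, hPdeg⟩ := Nat.find_spec hex
  have hmin : ∀ Q : MvPolynomial (Fin m) k, Q ≠ 0 → Q.totalDegree < Nat.find hex →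
      aeval g Q ≠ 0 := by
    intro Q hQ0 hQdeg hQev
    exact Nat.find_min hex hQdeg ⟨Q, hQ0, hQev, rfl⟩
  have hPd0 : P.totalDegree ≠ 0 := by
    intro h0
    have := eq_C_of_totalDegree_eq_zero' h0
    rw [this] at hPev
    rw [aeval_C, MvPolynomial.algebraMap_eq, MvPolynomial.C_eq_zero] at hPev
    rw [this, hPev, map_zero] at hP0
    exact hP0 rfl
  obtain ⟨j0, hj0⟩ := exists_pderiv_ne_zero hPd0
  set v : Fin m → MvPolynomial (Fin m) k := fun j => aeval g (pderiv j P) with hv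
  have hvne : v ≠ 0 := by
    intro h0
    apply hmin (pderiv j0 P) hj0 (hPdeg ▸ totalDegree_pderiv_lt hPd0 j0)
    exact congrFun h0 j0
  have hmv : (Matrix.of fun i j : Fin m => pderiv i (g j)).mulVec v = 0 := by
    funext i
    have hcr := pderiv_aeval_eq g P i
    rw [hPev, map_zero] at hcr
    simp only [Matrix.mulVec, dotProduct, Matrix.of_apply, Pi.zero_apply, hv]
    exact (Finset.sum_congr rfl (fun j _ => mul_comm _ _)).trans hcr.symm
  exact Matrix.exists_mulVec_eq_zero_iff.mp ⟨v, hvne, hmv⟩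


lemma finsupp_coord_le_sum {ι : Type*} (v : ι →₀ ℕ) (i : ι) :
    v i ≤ v.sum fun _ e => e := by
  by_cases h : v i = 0
  · omega
  · exact Finset.single_le_sum (fun _ _ => Nat.zero_le _)
      (Finsupp.mem_support_iff.mpr h)

lemma not_algIndep_of_card {m : ℕ} {ι : Type*} [Fintype ι]
    (hcard : m < Fintype.card ι) (h : ι → MvPolynomial (Fin m) k) :
    ¬ AlgebraicIndependent k h := by
  classical
  intro hind
  have hinj : Function.Injective (aeval h : MvPolynomial ι k →ₐ[k] MvPolynomial (Fin m) k) :=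
    algebraicIndependent_iff_injective_aeval.mp hind
  set n := Fintype.card ι with hn
  set d := Finset.univ.sup (fun i => (h i).totalDegree) with hd
  set A := n * d + 1 with hA
  set q := A ^ m with hq
  set N := n * q with hN
  set T1 := {v : ι →₀ ℕ // (v.sum fun _ e => e) ≤ N} with hT1
  set T2 := {w : Fin m →₀ ℕ // (w.sum fun _ e => e) ≤ N * d} with hT2
  -- finiteness
  have emb1 : ∃ f : T1 → (ι → Fin (N + 1)), Function.Injective f := by
    refine ⟨fun v i => ⟨v.1 i, Nat.lt_succ_of_le ((finsupp_coord_le_sum v.1 i).trans v.2)⟩, ?_⟩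
    intro a b hab
    exact Subtype.ext (Finsupp.ext fun i => congrArg Fin.val (congrFun hab i))
  have emb2 : ∃ f : T2 → (Fin m → Fin (N * d + 1)), Function.Injective f := by
    refine ⟨fun v i => ⟨v.1 i, Nat.lt_succ_of_le ((finsupp_coord_le_sum v.1 i).trans v.2)⟩, ?_⟩
    intro a b hab
    exact Subtype.ext (Finsupp.ext fun i => congrArg Fin.val (congrFun hab i))
  have fin1 : Finite T1 := Finite.of_injective _ emb1.choose_spec
  have fin2 : Finite T2 := Finite.of_injective _ emb2.choose_spec
  letI := Fintype.ofFinite T1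
  letI := Fintype.ofFinite T2
  -- the independent family
  set e1 : T1 → MvPolynomial (Fin m) k := fun v => aeval h (monomial v.1 (1 : k)) with he1
  have hli : LinearIndependent k e1 := by
    have h0 : LinearIndependent k (fun v : T1 => (monomial v.1 (1 : k) : MvPolynomial ι k)) := by
      have := (basisMonomials ι k).linearIndependent
      have h2 := this.comp (Subtype.val : T1 → (ι →₀ ℕ)) Subtype.val_injective
      exact h2
    have := h0.map' (aeval h : MvPolynomial ι k →ₐ[k] MvPolynomial (Fin m) k).toLinearMap
      (LinearMap.ker_eq_bot.mpr hinj)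
    exact this
  -- span
  set e2 : T2 → MvPolynomial (Fin m) k := fun w => monomial w.1 (1 : k) with he2
  set W := Submodule.span k (Set.range e2) with hW
  have hdeg : ∀ v : T1, (e1 v).totalDegree ≤ N * d := by
    intro v
    have h1 : (e1 v) = v.1.prod fun i e => h i ^ e := by
      simp only [he1, aeval_monomial, map_one, one_mul]
    rw [h1, Finsupp.prod]
    refine (totalDegree_finset_prod _ _).trans ?_
    have h2 : ∀ i ∈ v.1.support, (h i ^ v.1 i).totalDegree ≤ v.1 i * d := by
      intro i _
      exact (totalDegree_pow _ _).trans
        (Nat.mul_le_mul_left _ (hd ▸ Finset.le_sup (f := fun i => (h i).totalDegree) (Finset.mem_univ i)))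
    refine (Finset.sum_le_sum h2).trans ?_
    rw [← Finset.sum_mul]
    exact Nat.mul_le_mul_right _ v.2
  have hmem : ∀ v : T1, e1 v ∈ W := by
    intro v
    have hdv := hdeg v
    obtain ⟨p, hp⟩ : ∃ p, p = e1 v := ⟨_, rfl⟩
    rw [← hp] at hdv ⊢
    rw [p.as_sum]
    refine Submodule.sum_mem _ fun u hu => ?_
    have hu2 : (u.sum fun _ e => e) ≤ N * d := (le_totalDegree hu).trans hdv
    have h3 : (monomial u) (coeff u p) = coeff u p • monomial u (1 : k) := by
      rw [smul_monomial, smul_eq_mul, mul_one]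
    rw [h3]
    exact Submodule.smul_mem _ _ (Submodule.subset_span ⟨⟨u, hu2⟩, rfl⟩)
  -- card T1 ≤ card T2
  haveI : Module.Finite k W := Module.Finite.span_of_finite k (Set.finite_range e2)
  have hcard1 : Fintype.card T1 ≤ Module.finrank k W := by
    have hliW : LinearIndependent k (fun v : T1 => (⟨e1 v, hmem v⟩ : W)) := by
      apply LinearIndependent.of_comp W.subtype
      exact hli
    exact hliW.fintype_card_le_finrank
  have hcard2 : Module.finrank k W ≤ Fintype.card T2 := by
    refine (finrank_span_le_card (Set.range e2)).trans ?_
    rw [Set.toFinset_range]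
    exact (Finset.card_image_le).trans (by simp)
  -- lower bound on card T1
  have hlow : (q + 1) ^ n ≤ Fintype.card T1 := by
    have : ∃ f : (ι → Fin (q + 1)) → T1, Function.Injective f := by
      refine ⟨fun g => ⟨Finsupp.equivFunOnFinite.symm (fun i => (g i : ℕ)), ?_⟩, ?_⟩
      · rw [Finsupp.sum_fintype _ _ (fun _ => rfl)]
        calc ∑ i, (Finsupp.equivFunOnFinite.symm (fun i => ((g i : ℕ))) i)
            = ∑ i, (g i : ℕ) := by
              exact Finset.sum_congr rfl fun i _ =>
                congrFun (Finsupp.coe_equivFunOnFinite_symm _) i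
          _ ≤ ∑ _i : ι, q := Finset.sum_le_sum fun i _ => Nat.lt_succ_iff.mp (g i).2
          _ = n * q := by rw [Finset.sum_const, smul_eq_mul, Finset.card_univ]
      · intro a b hab
        funext i
        have := congrArg (fun t : T1 => t.1 i) hab
        simp only [Finsupp.coe_equivFunOnFinite_symm] at this
        exact Fin.ext this
    obtain ⟨f, hf⟩ := this
    calc (q + 1) ^ n = Fintype.card (ι → Fin (q + 1)) := by simp [hn]
      _ ≤ Fintype.card T1 := Fintype.card_le_of_injective f hf
  -- upper bound on card T2
  have hup : Fintype.card T2 ≤ (N * d + 1) ^ m := by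
    obtain ⟨f, hf⟩ := emb2
    calc Fintype.card T2 ≤ Fintype.card (Fin m → Fin (N * d + 1)) :=
          Fintype.card_le_of_injective f hf
      _ = (N * d + 1) ^ m := by simp
  -- arithmetic contradiction
  have harith : (N * d + 1) ^ m < (q + 1) ^ n := by
    have hq1 : 1 ≤ q := Nat.one_le_pow _ _ (by omega)
    have h1 : N * d + 1 ≤ A * (q + 1) := by
      have : N * d = n * d * q := by rw [hN]; ring
      rw [this, hA]; nlinarith
    calc (N * d + 1) ^ m ≤ (A * (q + 1)) ^ m := Nat.pow_le_pow_left h1 m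
      _ = q * (q + 1) ^ m := by rw [mul_pow, hq]
      _ < (q + 1) * (q + 1) ^ m := by
          have : (0:ℕ) < (q + 1) ^ m := Nat.pow_pos (by omega)
          exact (Nat.mul_lt_mul_right this).mpr (by omega)
      _ = (q + 1) ^ (m + 1) := by ring
      _ ≤ (q + 1) ^ n := Nat.pow_le_pow_right (by omega) (by omega)
  omega

lemma pderiv_eval₂_aeval {m : ℕ} (g : Fin m → MvPolynomial (Fin m) k)
    (y : MvPolynomial (Fin m) k) (q : Polynomial (MvPolynomial (Fin m) k)) (l : Fin m) :
    pderiv l (q.eval₂ (aeval g : MvPolynomial (Fin m) k →ₐ[k] _).toRingHom y) =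
      (∑ j, pderiv l (g j) * (q.sum fun e c => aeval g (pderiv j c) * y ^ e))
        + (Polynomial.derivative q).eval₂ (aeval g :
            MvPolynomial (Fin m) k →ₐ[k] _).toRingHom y * pderiv l y := by
  induction q using Polynomial.induction_on' with
  | add p r hp hr =>
    rw [Polynomial.eval₂_add, map_add, hp, hr, map_add, Polynomial.eval₂_add]
    have hs : ∀ j : Fin m, ((p + r).sum fun e c => aeval g (pderiv j c) * y ^ e)
        = (p.sum fun e c => aeval g (pderiv j c) * y ^ e)
          + (r.sum fun e c => aeval g (pderiv j c) * y ^ e) := by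
      intro j
      refine Polynomial.sum_add_index p r _ (fun e => by simp) (fun e b1 b2 => by
        rw [map_add, map_add, add_mul])
    simp only [hs]
    simp only [mul_add, Finset.sum_add_distrib]
    ring
  | monomial e c =>
    rw [Polynomial.eval₂_monomial]
    have h1 : pderiv l ((aeval g : MvPolynomial (Fin m) k →ₐ[k] _).toRingHom c * y ^ e)
        = pderiv l (aeval g c) * y ^ e + aeval g c * ((e : MvPolynomial (Fin m) k)
            * y ^ (e - 1) * pderiv l y) := by
      rw [pderiv_mul, pderiv_pow]
      rfl
    rw [h1, pderiv_aeval_eq g c l]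
    have h2 : ∀ j : Fin m, ((Polynomial.monomial e c).sum fun e' c' =>
        aeval g (pderiv j c') * y ^ e') = aeval g (pderiv j c) * y ^ e := by
      intro j
      exact Polynomial.sum_monomial_index c _ (by simp)
    simp only [h2]
    rw [Polynomial.derivative_monomial, Polynomial.eval₂_monomial]
    have h3 : ((aeval g : MvPolynomial (Fin m) k →ₐ[k] _).toRingHom (c * (e : ℕ)))
        = aeval g c * (e : MvPolynomial (Fin m) k) := by
      rw [map_mul]
      simp
    rw [h3, Finset.sum_mul]
    rw [Finset.sum_congr rfl (fun j _ => by ring : ∀ j ∈ Finset.univ,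
      (aeval g (pderiv j c) * pderiv l (g j)) * y ^ e
        = pderiv l (g j) * (aeval g (pderiv j c) * y ^ e))]
    ring

lemma det_ne_zero_of_algIndep {m : ℕ} (g : Fin m → MvPolynomial (Fin m) k)
    (hg : AlgebraicIndependent k g) :
    (Matrix.of fun i j : Fin m => pderiv i (g j)).det ≠ 0 := by
  classical
  set φ : MvPolynomial (Fin m) k →ₐ[k] MvPolynomial (Fin m) k := aeval g with hφ
  have hφinj : Function.Injective φ := algebraicIndependent_iff_injective_aeval.mp hg
  have key : ∀ i : Fin m, ∃ q : Polynomial (MvPolynomial (Fin m) k), q ≠ 0 ∧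
      q.eval₂ φ.toRingHom (X i) = 0 ∧
      (Polynomial.derivative q).eval₂ φ.toRingHom (X i) ≠ 0 := by
    intro i
    have halg : IsAlgebraic (Algebra.adjoin k (Set.range g)) (X i :
        MvPolynomial (Fin m) k) := by
      by_contra htr
      have hopt : AlgebraicIndependent k (fun o : Option (Fin m) => o.elim (X i) g) :=
        (hg.option_iff_transcendental (X i)).mpr htr
      exact not_algIndep_of_card (by simp) _ hopt
    obtain ⟨p, hp0, hpev⟩ := halg
    have hreprinj : Function.Injective hg.repr :=
      (RingHom.injective_iff_ker_eq_bot hg.repr.toRingHom).mpr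
        hg.repr_ker
    have hex : ∃ nn : ℕ, ∃ q : Polynomial (MvPolynomial (Fin m) k), q ≠ 0 ∧
        q.eval₂ φ.toRingHom (X i) = 0 ∧ q.natDegree = nn := by
      refine ⟨_, p.map hg.repr.toRingHom, ?_, ?_, rfl⟩
      · intro h0
        exact hp0 ((Polynomial.map_injective hg.repr.toRingHom hreprinj)
          (by rw [h0, Polynomial.map_zero]))
      · rw [Polynomial.eval₂_map]
        have hcomp : φ.toRingHom.comp hg.repr.toRingHom
            = algebraMap (Algebra.adjoin k (Set.range g)) (MvPolynomial (Fin m) k) :=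
          RingHom.ext fun a => by simpa [hφ] using hg.aeval_repr a
        rw [hcomp, ← Polynomial.aeval_def]
        exact hpev
    obtain ⟨q, hq0, hqev, hqdeg⟩ := Nat.find_spec hex
    have hmin : ∀ q' : Polynomial (MvPolynomial (Fin m) k), q' ≠ 0 →
        q'.natDegree < Nat.find hex → q'.eval₂ φ.toRingHom (X i) ≠ 0 := by
      intro q' h0 hdeg hev
      exact Nat.find_min hex hdeg ⟨q', h0, hev, rfl⟩
    have hnd : q.natDegree ≠ 0 := by
      intro h0
      have hC := Polynomial.eq_C_of_natDegree_eq_zero h0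
      rw [hC, Polynomial.eval₂_C] at hqev
      have : q.coeff 0 = 0 := hφinj (by simpa using hqev)
      rw [hC, this, map_zero] at hq0
      exact hq0 rfl
    have hd0 : Polynomial.derivative q ≠ 0 := fun h0 =>
      hnd (Polynomial.natDegree_eq_zero_of_derivative_eq_zero h0)
    exact ⟨q, hq0, hqev, hmin _ hd0 (hqdeg ▸ Polynomial.natDegree_derivative_lt hnd)⟩
  choose q hq0 hqev hqder using key
  set E : Fin m → MvPolynomial (Fin m) k :=
    fun i => (Polynomial.derivative (q i)).eval₂ φ.toRingHom (X i) with hE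
  set J : Matrix (Fin m) (Fin m) (MvPolynomial (Fin m) k) :=
    Matrix.of fun l j => pderiv l (g j) with hJ
  set B : Matrix (Fin m) (Fin m) (MvPolynomial (Fin m) k) :=
    Matrix.of fun j i => (q i).sum fun e c => aeval g (pderiv j c) * X i ^ e with hB
  have hrel : ∀ l i : Fin m, (∑ j, J l j * B j i) = - (E i * pderiv l (X i)) := by
    intro l i
    have h0 := pderiv_eval₂_aeval g (X i) (q i) l
    rw [hqev i, map_zero] at h0
    have h1 : ∑ j, J l j * B j i
        = ∑ j, pderiv l (g j) * ((q i).sum fun e c => aeval g (pderiv j c) * X i ^ e) := rfl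
    rw [h1]
    exact eq_neg_of_add_eq_zero_left h0.symm
  have hJB : J * B = - Matrix.diagonal E := by
    ext l i
    rw [Matrix.mul_apply, hrel l i]
    by_cases hli : i = l
    · subst hli
      rw [pderiv_X_self, mul_one]
      simp
    · rw [pderiv_X_of_ne hli, mul_zero, neg_zero]
      rw [Matrix.neg_apply, Matrix.diagonal_apply_ne _ (fun h => hli h.symm), neg_zero]
  intro hdet
  have hdetEq := congrArg Matrix.det hJB
  rw [Matrix.det_mul, Matrix.det_neg, Matrix.det_diagonal, hdet, zero_mul] at hdetEq
  have hne : ((-1 : MvPolynomial (Fin m) k) ^ Fintype.card (Fin m) * ∏ i, E i) ≠ 0 := by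
    apply mul_ne_zero
    · exact pow_ne_zero _ (by simp)
    · exact Finset.prod_ne_zero_iff.mpr fun i _ => hqder i
  exact hne hdetEq.symm


end JacobianCriterion

open MvPolynomial


/-- The Hessian determinant of a homogeneous polynomial vanishes identically
iff its partial derivatives are algebraically dependent over `k`. -/
theorem hessian_eq_zero_iff_algebraicDependent {k : Type*} [Field k] [CharZero k]
    {r d : ℕ} (f : MvPolynomial (Fin (r + 1)) k) (hf : f.IsHomogeneous d) :
    (Matrix.of fun i j : Fin (r + 1) =>
        MvPolynomial.pderiv i (MvPolynomial.pderiv j f)).det = 0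
      ↔ ¬ AlgebraicIndependent k (fun i : Fin (r + 1) => MvPolynomial.pderiv i f) := by
  constructor
  · intro hdet hind
    exact det_ne_zero_of_algIndep (fun j => pderiv j f) hind hdet
  · intro hdep
    exact det_eq_zero_of_not_algIndep (fun j => pderiv j f) hdep
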